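/- The hairclip Schwarz function S(z,t) = Log((e^t − e^z)/(1 + e^{t+z})) (principal complex logarithm) satisfies the curve-shortening Schwarz function equation: for every (z,t) ∈ ℂ × ℝ such that e^t − e^z ≠ 0, 1 + e^{t+z} ≠ 0, and the quotient (e^t − e^z)/(1 + e^{t+z}) does not lie in (−∞,0], one has S_z = −e^z(1 + e^{2t})/((e^t − e^z)(1 + e^{t+z})), S_t = e^t(1 + e^{2z})/((e^t − e^z)(1 + e^{t+z})), and S_t S_z = S_zz. -/

import Mathlib

open Complex

/-- The hairclip Schwarz function `S(z,t) = Log((e^t − e^z)/(1 + e^{t+z}))`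
satisfies the curve-shortening Schwarz function equation `S_t S_z = S_zz`. -/
theorem hairclip_schwarz (z : ℂ) (t : ℝ)
    (hA : Complex.exp (t : ℂ) - Complex.exp z ≠ 0)
    (hB : 1 + Complex.exp ((t : ℂ) + z) ≠ 0)
    (hslit : ∀ x : ℝ, x ≤ 0 →
      (Complex.exp (t : ℂ) - Complex.exp z) / (1 + Complex.exp ((t : ℂ) + z)) ≠ (x : ℂ)) :
    HasDerivAt
      (fun w : ℂ =>
        Complex.log ((Complex.exp (t : ℂ) - Complex.exp w) / (1 + Complex.exp ((t : ℂ) + w))))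
      (-Complex.exp z * (1 + Complex.exp (2 * (t : ℂ))) /
        ((Complex.exp (t : ℂ) - Complex.exp z) * (1 + Complex.exp ((t : ℂ) + z)))) z ∧
    HasDerivAt
      (fun s : ℝ =>
        Complex.log ((Complex.exp (s : ℂ) - Complex.exp z) / (1 + Complex.exp ((s : ℂ) + z))))
      (Complex.exp (t : ℂ) * (1 + Complex.exp (2 * z)) /
        ((Complex.exp (t : ℂ) - Complex.exp z) * (1 + Complex.exp ((t : ℂ) + z)))) t ∧
    HasDerivAt
      (fun w : ℂ =>
        -Complex.exp w * (1 + Complex.exp (2 * (t : ℂ))) /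
          ((Complex.exp (t : ℂ) - Complex.exp w) * (1 + Complex.exp ((t : ℂ) + w))))
      ((Complex.exp (t : ℂ) * (1 + Complex.exp (2 * z)) /
          ((Complex.exp (t : ℂ) - Complex.exp z) * (1 + Complex.exp ((t : ℂ) + z)))) *
        (-Complex.exp z * (1 + Complex.exp (2 * (t : ℂ))) /
          ((Complex.exp (t : ℂ) - Complex.exp z) * (1 + Complex.exp ((t : ℂ) + z))))) z := by
  set A : ℂ := Complex.exp (t : ℂ) - Complex.exp z with hAdef
  set B : ℂ := 1 + Complex.exp ((t : ℂ) + z) with hBdef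
  have hmem : A / B ∈ Complex.slitPlane := by
    by_contra h
    rw [Complex.mem_slitPlane_iff] at h
    push_neg at h
    exact hslit (A / B).re (h.1)
      (by rw [← Complex.re_add_im (A / B), h.2]; simp)
  -- derivative in z
  have hA' : HasDerivAt (fun w : ℂ => Complex.exp (t : ℂ) - Complex.exp w)
      (-Complex.exp z) z := (Complex.hasDerivAt_exp z).const_sub _
  have hB' : HasDerivAt (fun w : ℂ => 1 + Complex.exp ((t : ℂ) + w))
      (Complex.exp ((t : ℂ) + z)) z := by
    have := (((hasDerivAt_id z).const_add (t : ℂ)).cexp).const_add (1 : ℂ)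
    simpa using this
  have hq : HasDerivAt (fun w : ℂ =>
      (Complex.exp (t : ℂ) - Complex.exp w) / (1 + Complex.exp ((t : ℂ) + w)))
      ((-Complex.exp z * B - A * Complex.exp ((t : ℂ) + z)) / B ^ 2) z := hA'.div hB' hB
  have hSz : HasDerivAt
      (fun w : ℂ =>
        Complex.log ((Complex.exp (t : ℂ) - Complex.exp w) / (1 + Complex.exp ((t : ℂ) + w))))
      (-Complex.exp z * (1 + Complex.exp (2 * (t : ℂ))) / (A * B)) z := by
    have := hq.clog hmem
    convert this using 1
    rw [div_div_div_eq, ← hAdef, ← hBdef,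
      div_eq_div_iff (mul_ne_zero hA hB) (mul_ne_zero (pow_ne_zero 2 hB) hA)]
    simp only [hAdef, hBdef, Complex.exp_add, two_mul]
    ring
  -- derivative in t
  have htA' : HasDerivAt (fun s : ℂ => Complex.exp s - Complex.exp z)
      (Complex.exp (t : ℂ)) (t : ℂ) := (Complex.hasDerivAt_exp _).sub_const _
  have htB' : HasDerivAt (fun s : ℂ => 1 + Complex.exp (s + z))
      (Complex.exp ((t : ℂ) + z)) (t : ℂ) := by
    have := (((hasDerivAt_id (t : ℂ)).add_const z).cexp).const_add (1 : ℂ)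
    simpa using this
  have htq : HasDerivAt (fun s : ℂ => (Complex.exp s - Complex.exp z) / (1 + Complex.exp (s + z)))
      ((Complex.exp (t : ℂ) * B - A * Complex.exp ((t : ℂ) + z)) / B ^ 2) (t : ℂ) :=
    htA'.div htB' hB
  have hSt : HasDerivAt
      (fun s : ℝ =>
        Complex.log ((Complex.exp (s : ℂ) - Complex.exp z) / (1 + Complex.exp ((s : ℂ) + z))))
      (Complex.exp (t : ℂ) * (1 + Complex.exp (2 * z)) / (A * B)) t := by
    have hc : HasDerivAt
        (fun s : ℂ => Complex.log ((Complex.exp s - Complex.exp z) / (1 + Complex.exp (s + z))))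
        ((Complex.exp (t : ℂ) * B - A * Complex.exp ((t : ℂ) + z)) / B ^ 2 / (A / B)) (t : ℂ) :=
      htq.clog hmem
    have hc2 := hc.comp_ofReal
    convert hc2 using 1
    rw [div_div_div_eq,
      div_eq_div_iff (mul_ne_zero hA hB) (mul_ne_zero (pow_ne_zero 2 hB) hA)]
    simp only [hAdef, hBdef, Complex.exp_add, two_mul]
    ring
  refine ⟨hSz, hSt, ?_⟩
  -- second derivative
  have hN : HasDerivAt (fun w : ℂ => -Complex.exp w * (1 + Complex.exp (2 * (t : ℂ))))
      (-Complex.exp z * (1 + Complex.exp (2 * (t : ℂ)))) z := by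
    have := ((Complex.hasDerivAt_exp z).neg).mul_const (1 + Complex.exp (2 * (t : ℂ)))
    simpa using this
  have hD : HasDerivAt (fun w : ℂ =>
      (Complex.exp (t : ℂ) - Complex.exp w) * (1 + Complex.exp ((t : ℂ) + w)))
      (-Complex.exp z * B + A * Complex.exp ((t : ℂ) + z)) z := hA'.mul hB'
  have h2 := hN.div hD (mul_ne_zero hA hB)
  refine h2.congr_deriv ?_
  symm
  rw [div_mul_div_comm, ← hAdef, ← hBdef]
  rw [div_eq_div_iff (by exact mul_ne_zero (mul_ne_zero hA hB) (mul_ne_zero hA hB))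
    (by exact pow_ne_zero 2 (mul_ne_zero hA hB))]
  simp only [hAdef, hBdef, Complex.exp_add, two_mul]
  ring
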